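/- Suppose W_min > C_1, B_• is a 1-feasible partition, bin B_1 contains at least one ball of weight w_1, and g_i(B_•) = C_i − w(B_i) ≥ w_1 for some i ≥ 2. Then there exists a 1-feasible partition B'_• with w(B'_1) < w(B_1); consequently w(B_1) > W_min. -/
import Mathlib

def ValidPartition (n d : ℕ) (m : ℕ → ℕ → ℕ) : Prop :=
  (∀ i ∈ Finset.Icc 1 n, ∑ j ∈ Finset.Icc 1 n, m i j = d) ∧
  (∀ j ∈ Finset.Icc 1 n, ∑ i ∈ Finset.Icc 1 n, m i j = d)

def binWeight (n : ℕ) (w : ℕ → ℕ) (m : ℕ → ℕ → ℕ) (j : ℕ) : ℕ :=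
  ∑ i ∈ Finset.Icc 1 n, m i j * w i

def OneFeasible (n d : ℕ) (w : ℕ → ℕ) (C : ℕ → ℤ) (m : ℕ → ℕ → ℕ) : Prop :=
  ValidPartition n d m ∧ ∀ j ∈ Finset.Icc 2 n, (binWeight n w m j : ℤ) ≤ C j

/-- Pointwise identity for the swapped partition, proved in a minimal context. -/
lemma swap_key (m : ℕ → ℕ → ℕ) (i' j i : ℕ) (hij : i' ≠ j) (hi1 : i ≠ 1)
    (h1 : 0 < m i' 1) (h2 : 0 < m j i) (a b : ℕ) :
    ((if a = i' ∧ b = 1 then m a b - 1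
      else if a = i' ∧ b = i then m a b + 1
      else if a = j ∧ b = 1 then m a b + 1
      else if a = j ∧ b = i then m a b - 1
      else m a b : ℕ) : ℤ)
    = (m a b : ℤ) +
      ((if b = 1 then (if a = j then (1 : ℤ) else 0) - (if a = i' then 1 else 0) else 0)
       + (if b = i then (if a = i' then (1 : ℤ) else 0) - (if a = j then 1 else 0) else 0)) := by
  by_cases hb1 : b = 1 <;> by_cases hbi : b = i <;>
    by_cases hai : a = i' <;> by_cases haj : a = j <;>
    subst_vars <;> simp_all <;> omega

/-- Lemma 2.5: if `W_min > C_1` (every 1-feasible partition exceeds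
`C_1` in bin 1), `B_•` is 1-feasible, bin `B_1` contains a ball of weight `w_1`, and
`g_i(B_•) = C_i − w(B_i) ≥ w_1` for some `i ≥ 2`, then there is a 1-feasible
partition `B'_•` with `w(B'_1) < w(B_1)`. -/
theorem exists_better_partition_of_large_gap
    (n d : ℕ) (hn : 1 ≤ n) (hd : 1 ≤ d)
    (w : ℕ → ℕ) (C : ℕ → ℤ)
    (hw : ∀ i, 1 ≤ i → i < n → w (i + 1) ≤ w i)
    (hC : ∀ i, 1 ≤ i → i < n → C (i + 1) ≤ C i)
    (hWmin : ∀ m' : ℕ → ℕ → ℕ, OneFeasible n d w C m' →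
      (C 1 < (binWeight n w m' 1 : ℤ)))
    (m : ℕ → ℕ → ℕ) (hm : OneFeasible n d w C m)
    (hball : ∃ i' ∈ Finset.Icc 1 n, w i' = w 1 ∧ 0 < m i' 1)
    (hgap : ∃ i ∈ Finset.Icc 2 n, (w 1 : ℤ) ≤ C i - (binWeight n w m i : ℤ)) :
    ∃ m' : ℕ → ℕ → ℕ, OneFeasible n d w C m' ∧
      binWeight n w m' 1 < binWeight n w m 1 := by
  classical
  obtain ⟨⟨hrow, hcol⟩, hfeas⟩ := hm
  obtain ⟨i', hi's, hwi', hmi'⟩ := hball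
  obtain ⟨i, his, hgap'⟩ := hgap
  set s := Finset.Icc 1 n with hs
  have h1s : (1 : ℕ) ∈ s := by simp [hs, hn]
  have hi2 : 2 ≤ i ∧ i ≤ n := by simpa [Finset.mem_Icc] using his
  have hiIcc : i ∈ s := by simp only [hs, Finset.mem_Icc]; omega
  have hi1 : i ≠ 1 := by omega
  -- monotonicity lemmas
  have wmono : ∀ k, 1 ≤ k → k ≤ n → w k ≤ w 1 := by
    intro k
    induction k with
    | zero => omega
    | succ p ih =>
      intro _ h2
      rcases Nat.eq_zero_or_pos p with h | h
      · simp [h]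
      · exact le_trans (hw p h (by omega)) (ih h (by omega))
  have Cmono : ∀ k, 1 ≤ k → k ≤ n → C k ≤ C 1 := by
    intro k
    induction k with
    | zero => omega
    | succ p ih =>
      intro _ h2
      rcases Nat.eq_zero_or_pos p with h | h
      · simp [h]
      · exact le_trans (hC p h (by omega)) (ih h (by omega))
  -- existence of a light ball in bin i
  have hexj : ∃ jj ∈ s, 0 < m jj i ∧ w jj < w 1 := by
    by_contra hno
    push_neg at hno
    have hge : d * w 1 ≤ binWeight n w m i := by
      unfold binWeight
      rw [← hcol i hiIcc, Finset.sum_mul]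
      apply Finset.sum_le_sum
      intro jj hjj
      rcases Nat.eq_zero_or_pos (m jj i) with h | h
      · simp [h]
      · exact Nat.mul_le_mul_left _ (hno jj hjj h)
    have hle : binWeight n w m 1 ≤ d * w 1 := by
      unfold binWeight
      rw [← hcol 1 h1s, Finset.sum_mul]
      apply Finset.sum_le_sum
      intro jj hjj
      have hjj' : 1 ≤ jj ∧ jj ≤ n := by simpa [hs, Finset.mem_Icc] using hjj
      exact Nat.mul_le_mul_left _ (wmono jj hjj'.1 hjj'.2)
    have hC1 := hWmin m ⟨⟨hrow, hcol⟩, hfeas⟩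
    have hCi1 := Cmono i (by omega) hi2.2
    have h1 : (binWeight n w m 1 : ℤ) ≤ ((d * w 1 : ℕ) : ℤ) := by exact_mod_cast hle
    have h2 : ((d * w 1 : ℕ) : ℤ) ≤ (binWeight n w m i : ℤ) := by exact_mod_cast hge
    have h3 : (0 : ℤ) ≤ (w 1 : ℤ) := by positivity
    linarith
  obtain ⟨j, hjs, hmji, hwj⟩ := hexj
  have hij' : i' ≠ j := by
    intro h
    rw [h] at hwi'
    omega
  -- the swapped partition
  set m' : ℕ → ℕ → ℕ := fun a b =>
    if a = i' ∧ b = 1 then m a b - 1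
    else if a = i' ∧ b = i then m a b + 1
    else if a = j ∧ b = 1 then m a b + 1
    else if a = j ∧ b = i then m a b - 1
    else m a b with hm'
  set E : ℕ → ℕ → ℤ := fun a b =>
    (if b = 1 then (if a = j then (1 : ℤ) else 0) - (if a = i' then 1 else 0) else 0)
    + (if b = i then (if a = i' then (1 : ℤ) else 0) - (if a = j then 1 else 0) else 0)
    with hE
  have key : ∀ a b, (m' a b : ℤ) = (m a b : ℤ) + E a b := by
    intro a b
    simp only [hm', hE]
    exact swap_key m i' j i hij' hi1 hmi' hmji a b
  -- row sums
  have rowsum : ∀ a ∈ s, ∑ b ∈ s, m' a b = d := by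
    intro a ha
    have : (∑ b ∈ s, (m' a b : ℤ)) = (d : ℤ) := by
      simp only [key]
      rw [Finset.sum_add_distrib]
      have h0 : ∑ b ∈ s, E a b = 0 := by
        simp only [hE]
        rw [Finset.sum_add_distrib, Finset.sum_ite_eq' s 1, Finset.sum_ite_eq' s i,
          if_pos h1s, if_pos hiIcc]
        ring
      rw [h0, add_zero]
      exact_mod_cast hrow a ha
    exact_mod_cast this
  -- column sums
  have colsum : ∀ b ∈ s, ∑ a ∈ s, m' a b = d := by
    intro b hb
    have : (∑ a ∈ s, (m' a b : ℤ)) = (d : ℤ) := by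
      simp only [key]
      rw [Finset.sum_add_distrib]
      have h0 : ∑ a ∈ s, E a b = 0 := by
        rcases eq_or_ne b 1 with rfl | hb1
        · simp [hE, Ne.symm hi1, Finset.sum_add_distrib, Finset.sum_sub_distrib,
            Finset.sum_ite_eq', hjs, hi's]
        · rcases eq_or_ne b i with rfl | hbi
          · simp [hE, hb1, Finset.sum_add_distrib, Finset.sum_sub_distrib,
              Finset.sum_ite_eq', hjs, hi's]
          · simp [hE, hb1, hbi]
      rw [h0, add_zero]
      exact_mod_cast hcol b hb
    exact_mod_cast this
  -- bin weights
  have bwkey : ∀ c, (binWeight n w m' c : ℤ) =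
      (binWeight n w m c : ℤ) + ∑ a ∈ s, E a c * w a := by
    intro c
    unfold binWeight
    push_cast
    rw [← Finset.sum_add_distrib]
    apply Finset.sum_congr rfl
    intro a _
    rw [key]
    ring
  have Esum1 : ∑ a ∈ s, E a 1 * w a = (w j : ℤ) - (w i' : ℤ) := by
    simp [hE, Ne.symm hi1, sub_mul, ite_mul, Finset.sum_sub_distrib,
      Finset.sum_ite_eq', hjs, hi's]
  have Esumi : ∑ a ∈ s, E a i * w a = (w i' : ℤ) - (w j : ℤ) := by
    simp [hE, hi1, sub_mul, ite_mul, Finset.sum_sub_distrib,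
      Finset.sum_ite_eq', hjs, hi's]
  have Esum0 : ∀ c, c ≠ 1 → c ≠ i → ∑ a ∈ s, E a c * w a = 0 := by
    intro c h1 h2
    simp [hE, h1, h2]
  refine ⟨m', ⟨⟨rowsum, colsum⟩, ?_⟩, ?_⟩
  · intro c hc
    have hc' : 2 ≤ c ∧ c ≤ n := by simpa [Finset.mem_Icc] using hc
    by_cases hci : c = i
    · subst hci
      rw [bwkey, Esumi, hwi']
      have hwj' : (0 : ℤ) ≤ (w j : ℤ) := by positivity
      linarith
    · rw [bwkey, Esum0 c (by omega) hci, add_zero]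
      exact hfeas c hc
  · have h := bwkey 1
    rw [Esum1, hwi'] at h
    have hlt : (binWeight n w m' 1 : ℤ) < (binWeight n w m 1 : ℤ) := by
      rw [h]
      have : (w j : ℤ) < (w 1 : ℤ) := by exact_mod_cast hwj
      linarith
    exact_mod_cast hlt
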